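/- Let X be a finite set with |X| = n ≥ 1. Suppose f, f′ : {1,…,n} → ℝ are such that for every TU-game v : 2^X → ℝ with v(∅) = 0 and every i ∈ X, Σ_{S ⊆ X, i ∈ S} f(|S|)(v(S) − v(S∖{i})) = Σ_{S ⊆ X, i ∈ S} f′(|S|)(v(S) − v(S∖{i})). Then f(k) = f′(k) for all 1 ≤ k ≤ n. In other words, the map sending a weight function on coalition sizes to the associated weighted semivalue is injective. -/

import Mathlib

/-- Let `X` be a finite set with `|X| = n ≥ 1`. If two weight functions
`f, f' : {1,…,n} → ℝ` induce the same weighted semivalue, i.e. for every TU-game `v` on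
`X` (with `v(∅) = 0`) and every player `i`,
`∑_{S ∋ i} f(|S|)(v(S) − v(S∖{i})) = ∑_{S ∋ i} f'(|S|)(v(S) − v(S∖{i}))`,
then `f(k) = f'(k)` for all `1 ≤ k ≤ n`. -/
theorem statement17 {X : Type*} [Fintype X] [DecidableEq X] (n : ℕ)
    (hn : Fintype.card X = n) (hn1 : 1 ≤ n) (f f' : ℕ → ℝ)
    (h : ∀ v : Finset X → ℝ, v ∅ = 0 → ∀ i : X,
      ∑ S ∈ Finset.univ.filter (fun S : Finset X => i ∈ S),
          f S.card * (v S - v (S.erase i))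
        = ∑ S ∈ Finset.univ.filter (fun S : Finset X => i ∈ S),
            f' S.card * (v S - v (S.erase i))) :
    ∀ k, 1 ≤ k → k ≤ n → f k = f' k := by
  intro k hk1 hkn
  -- pick a player i
  have hcard : 0 < Fintype.card X := by omega
  obtain ⟨i⟩ := Fintype.card_pos_iff.mp hcard
  -- pick a coalition T of size k containing i
  obtain ⟨T, hiT, -, hTcard⟩ :=
    Finset.exists_subsuperset_card_eq (Finset.subset_univ {i})
      (by simpa using hk1) (by simpa [hn] using hkn)
  have hiT' : i ∈ T := hiT (Finset.mem_singleton_self i)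
  -- test game: indicator of T
  set v : Finset X → ℝ := fun S => if S = T then 1 else 0 with hv
  have hv0 : v ∅ = 0 := by
    simp only [hv]
    rw [if_neg]
    intro hE
    rw [← hE] at hiT'; simp at hiT'
  have key := h v hv0 i
  -- each sum has a single nonzero term, S = T
  have hterm : ∀ g : ℕ → ℝ,
      ∑ S ∈ Finset.univ.filter (fun S : Finset X => i ∈ S),
          g S.card * (v S - v (S.erase i)) = g k := by
    intro g
    rw [Finset.sum_eq_single T]
    · have h1 : v T = 1 := by simp [hv]
      have h2 : v (T.erase i) = 0 := by
        simp only [hv]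
        rw [if_neg]
        intro hE
        exact (Finset.notMem_erase i T) (hE.symm ▸ hiT')
      rw [h1, h2, hTcard]; ring
    · intro S _ hST
      have h1 : v S = 0 := by simp [hv, hST]
      have h2 : v (S.erase i) = 0 := by
        simp only [hv]
        rw [if_neg]
        intro hE
        exact (Finset.notMem_erase i S) (hE.symm ▸ hiT')
      rw [h1, h2]; ring
    · intro hT
      exact absurd (Finset.mem_filter.mpr ⟨Finset.mem_univ T, hiT'⟩) hT
  rw [hterm f, hterm f'] at key
  exact key
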